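/- Let G be a group of nilpotency class ≤ 5, x, y ∈ G, u = [y,x][y,x,y]. Then [y⁻¹, u] = [y,x,y], [y⁻¹,u,y⁻¹] = [y,x,y,y,y]·[y,x,y,y]⁻¹, and [y⁻¹,u,y⁻¹,y⁻¹] = [y,x,y,y,y]. -/

import Mathlib

/-- The commutator convention of the paper: `[x,y] = x⁻¹y⁻¹xy`. -/
def pcomm {G : Type*} [Group G] (x y : G) : G := x⁻¹ * y⁻¹ * x * y

/-- Left-normed iterated commutator `[x, _k y]` with `[x, _0 y] = x`. -/
def pcommIter {G : Type*} [Group G] (x y : G) : ℕ → G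
  | 0 => x
  | k + 1 => pcomm (pcommIter x y k) y

open scoped commutatorElement

lemma pcomm_eq_commutatorElement {G : Type*} [Group G] (a b : G) :
    pcomm a b = ⁅a⁻¹, b⁻¹⁆ := by
  simp [pcomm, commutatorElement_def]

lemma pcomm_mem_commutator {G : Type*} [Group G] {H K : Subgroup G} {a b : G}
    (ha : a ∈ H) (hb : b ∈ K) : pcomm a b ∈ ⁅H, K⁆ := by
  rw [pcomm_eq_commutatorElement]
  exact Subgroup.commutator_mem_commutator (H.inv_mem ha) (K.inv_mem hb)

lemma mem_lcs_succ {G : Type*} [Group G] {n : ℕ} {g : G} (h : G)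
    (hg : g ∈ (⊤ : Subgroup G).lowerCentralSeries n) : ⁅g, h⁆ ∈ (⊤ : Subgroup G).lowerCentralSeries (n + 1) := by
  rw [mem_lowerCentralSeries_succ_iff]
  exact Subgroup.subset_closure ⟨g, hg, h, Subgroup.mem_top h, (commutatorElement_def g h).symm⟩

lemma pcomm_mem_lcs_succ {G : Type*} [Group G] {n : ℕ} {g : G} (h : G)
    (hg : g ∈ (⊤ : Subgroup G).lowerCentralSeries n) : pcomm g h ∈ (⊤ : Subgroup G).lowerCentralSeries (n + 1) := by
  rw [pcomm_eq_commutatorElement]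
  exact mem_lcs_succ h⁻¹ (((⊤ : Subgroup G).lowerCentralSeries n).inv_mem hg)

/-- in a class ≤ 5 group with `u = [y,x][y,x,y]`:
`[y⁻¹,u] = [y,x,y]`, `[y⁻¹,u,y⁻¹] = [y,x,y,y,y]·[y,x,y,y]⁻¹`, and
`[y⁻¹,u,y⁻¹,y⁻¹] = [y,x,y,y,y]`. -/
theorem class_le_five_u_identities {G : Type*} [Group G]
    (h5 : (⊤ : Subgroup G).lowerCentralSeries 5 = ⊥) (x y : G) :
    pcomm y⁻¹ (pcomm y x * pcomm (pcomm y x) y) = pcomm (pcomm y x) y ∧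
    pcomm (pcomm y⁻¹ (pcomm y x * pcomm (pcomm y x) y)) y⁻¹
      = pcomm (pcomm (pcomm (pcomm y x) y) y) y *
          (pcomm (pcomm (pcomm y x) y) y)⁻¹ ∧
    pcomm (pcomm (pcomm y⁻¹ (pcomm y x * pcomm (pcomm y x) y)) y⁻¹) y⁻¹
      = pcomm (pcomm (pcomm (pcomm y x) y) y) y := by
  set a := pcomm y x with ha
  set b := pcomm a y with hb
  set c := pcomm b y with hc
  set d := pcomm c y with hd
  -- memberships in the lower central series
  have ma : a ∈ (⊤ : Subgroup G).lowerCentralSeries 1 :=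
    pcomm_mem_lcs_succ x (by simp [lowerCentralSeries_zero])
  have mb : b ∈ (⊤ : Subgroup G).lowerCentralSeries 2 := pcomm_mem_lcs_succ y ma
  have mc : c ∈ (⊤ : Subgroup G).lowerCentralSeries 3 := pcomm_mem_lcs_succ y mb
  have md : d ∈ (⊤ : Subgroup G).lowerCentralSeries 4 := pcomm_mem_lcs_succ y mc
  -- d is central
  have hcen : ∀ g : G, d * g = g * d := by
    intro g
    have h1 : ⁅d, g⁆ ∈ (⊤ : Subgroup G).lowerCentralSeries 5 := mem_lcs_succ g md
    rw [h5, Subgroup.mem_bot] at h1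
    have := commutatorElement_eq_one_iff_mul_comm.mp h1
    exact this
  have hdy : d * y = y * d := hcen y
  have hdc : d * c = c * d := hcen c
  -- claim 1 : pure group identity since a * b = y⁻¹ * a * y
  have hab : a * b = y⁻¹ * a * y := by
    rw [hb]; simp [pcomm]; group
  have claim1 : pcomm y⁻¹ (a * b) = b := by
    rw [hab, hb]
    simp only [pcomm]
    group
  -- key conjugation relation: y * c * y⁻¹ = c * d⁻¹
  have hyc : y * c * y⁻¹ = c * d⁻¹ := by
    have : y⁻¹ * c * y = c * d := by rw [hd]; simp [pcomm]; group
    have h2 : c = y * (c * d) * y⁻¹ := by rw [← this]; group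
    calc y * c * y⁻¹ = y * (c * d) * y⁻¹ * (y * d⁻¹ * y⁻¹) := by group
      _ = c * (y * d⁻¹ * y⁻¹) := by rw [← h2]
      _ = c * d⁻¹ := by
          have : y * d⁻¹ = d⁻¹ * y := by
            have := hdy
            calc y * d⁻¹ = d⁻¹ * (d * y) * d⁻¹ := by group
              _ = d⁻¹ * (y * d) * d⁻¹ := by rw [hdy]
              _ = d⁻¹ * y := by group
          rw [show y * d⁻¹ * y⁻¹ = d⁻¹ from by rw [this]; group]
  -- claim 2 : pcomm b y⁻¹ = d * c⁻¹
  have hby : b⁻¹ * y * b = y * c⁻¹ := by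
    have : y⁻¹ * b * y = b * c := by rw [hc]; simp [pcomm]; group
    have h2 : b * y = y * b * c := by
      calc b * y = y * (y⁻¹ * b * y) := by group
        _ = y * (b * c) := by rw [this]
        _ = y * b * c := by group
    calc b⁻¹ * y * b = b⁻¹ * (y * b * c) * c⁻¹ := by group
      _ = b⁻¹ * (b * y) * c⁻¹ := by rw [← h2]
      _ = y * c⁻¹ := by group
  have claim2 : pcomm b y⁻¹ = d * c⁻¹ := by
    have hycinv : y * c⁻¹ * y⁻¹ = d * c⁻¹ := by
      have := hyc
      have h2 : (y * c * y⁻¹)⁻¹ = (c * d⁻¹)⁻¹ := by rw [this]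
      calc y * c⁻¹ * y⁻¹ = (y * c * y⁻¹)⁻¹ := by group
        _ = (c * d⁻¹)⁻¹ := h2
        _ = d * c⁻¹ := by group
    calc pcomm b y⁻¹ = b⁻¹ * y * b * y⁻¹ := by simp [pcomm]
      _ = (y * c⁻¹) * y⁻¹ := by rw [hby]
      _ = d * c⁻¹ := hycinv
  -- claim 3 : pcomm (d * c⁻¹) y⁻¹ = d
  have claim3 : pcomm (d * c⁻¹) y⁻¹ = d := by
    have hycinv : y * c⁻¹ * y⁻¹ = d * c⁻¹ := by
      have h2 : (y * c * y⁻¹)⁻¹ = (c * d⁻¹)⁻¹ := by rw [hyc]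
      calc y * c⁻¹ * y⁻¹ = (y * c * y⁻¹)⁻¹ := by group
        _ = (c * d⁻¹)⁻¹ := h2
        _ = d * c⁻¹ := by group
    have hyd : y * d = d * y := hdy.symm
    calc pcomm (d * c⁻¹) y⁻¹ = c * d⁻¹ * (y * d) * c⁻¹ * y⁻¹ := by simp [pcomm]; group
      _ = c * d⁻¹ * (d * y) * c⁻¹ * y⁻¹ := by rw [hyd]
      _ = c * (y * c⁻¹ * y⁻¹) := by group
      _ = c * (d * c⁻¹) := by rw [hycinv]
      _ = c * d * c⁻¹ := by group
      _ = d * c * c⁻¹ := by rw [hdc]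
      _ = d := by group
  refine ⟨claim1, ?_, ?_⟩
  · rw [claim1, claim2]
  · rw [claim1, claim2, claim3]
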